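/- arXiv:2001.06164 — 3 statements merged into one kernel-verified Lean document; each statement's English description precedes it below -/
import Mathlib

section
/- Let d ≥ 3, 1 ≤ k ≤ d - 2, and let B_{d,k}(z) = Σ_{i=0}^{k} (-1)^{k-i} · [∏_{j=0, j≠i}^{k}(d - j)] · (1/((k-i)!·i!)) · z^{d-i} be the normalized single-cycle Belyi polynomial. Suppose p is a prime with k + 1 < p and p divides d - r for some unique 0 ≤ r ≤ k (and p divides no other d - j with 0 ≤ j ≤ k). Then, reducing coefficients modulo p, B_{d,k} is congruent to the monomial s·z^{d-r}, where s = (-1)^{k-r} · [∏_{j=0, j≠r}^{k}(d-j)] · ((k-r)!·r!)^{-1} is a nonzero element of F_p. -/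
open Polynomial

/-- Reduction of the normalized single-cycle Belyi polynomial `B_{d,k}` modulo a suitable
prime `p`: it is congruent to the monomial `s • z^(d-r)` with `s ≠ 0` in `𝔽_p`. -/
theorem stmt4 (d k : ℕ) (hd : 3 ≤ d) (hk1 : 1 ≤ k) (hk2 : k ≤ d - 2)
    (p : ℕ) [Fact p.Prime] (hkp : k + 1 < p)
    (r : ℕ) (hr : r ≤ k) (hpr : p ∣ d - r)
    (hunique : ∀ j ≤ k, j ≠ r → ¬ p ∣ d - j) :
    (∑ i ∈ Finset.range (k + 1),
        C ((-1 : ZMod p) ^ (k - i)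
            * (∏ j ∈ (Finset.range (k + 1)).erase i, ((d : ZMod p) - (j : ZMod p)))
            * (((Nat.factorial (k - i) * Nat.factorial i : ℕ) : ZMod p))⁻¹)
          * X ^ (d - i))
      = C ((-1 : ZMod p) ^ (k - r)
            * (∏ j ∈ (Finset.range (k + 1)).erase r, ((d : ZMod p) - (j : ZMod p)))
            * (((Nat.factorial (k - r) * Nat.factorial r : ℕ) : ZMod p))⁻¹)
          * X ^ (d - r)
    ∧ (-1 : ZMod p) ^ (k - r)
        * (∏ j ∈ (Finset.range (k + 1)).erase r, ((d : ZMod p) - (j : ZMod p)))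
        * (((Nat.factorial (k - r) * Nat.factorial r : ℕ) : ZMod p))⁻¹ ≠ 0 := by
  have hp : p.Prime := Fact.out
  have hkd : k ≤ d := le_trans hk2 (Nat.sub_le d 2)
  -- casting lemma: for j ≤ k, (d : ZMod p) - j = 0 ↔ p ∣ d - j
  have hcast : ∀ j, j ≤ k → ((d : ZMod p) - (j : ZMod p) = 0 ↔ p ∣ d - j) := by
    intro j hj
    have hjd : j ≤ d := le_trans hj hkd
    rw [← Nat.cast_sub hjd, ZMod.natCast_eq_zero_iff]
  constructor
  · apply Finset.sum_eq_single_of_mem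
    · exact Finset.mem_range.mpr (Nat.lt_succ_of_le hr)
    · intro i hi hir
      have hprod : (∏ j ∈ (Finset.range (k + 1)).erase i, ((d : ZMod p) - (j : ZMod p))) = 0 := by
        apply Finset.prod_eq_zero (i := r)
        · exact Finset.mem_erase.mpr ⟨(Ne.symm hir), Finset.mem_range.mpr (Nat.lt_succ_of_le hr)⟩
        · exact (hcast r hr).mpr hpr
      rw [hprod]
      simp
  · have h1 : ((-1 : ZMod p) ^ (k - r)) ≠ 0 := by
      apply pow_ne_zero; simp
    have h2 : (∏ j ∈ (Finset.range (k + 1)).erase r, ((d : ZMod p) - (j : ZMod p))) ≠ 0 := by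
      apply Finset.prod_ne_zero_iff.mpr
      intro j hj
      obtain ⟨hjr, hjk⟩ := Finset.mem_erase.mp hj
      have hjk' : j ≤ k := Nat.lt_succ_iff.mp (Finset.mem_range.mp hjk)
      intro h0
      exact hunique j hjk' hjr ((hcast j hjk').mp h0)
    have h3 : (((Nat.factorial (k - r) * Nat.factorial r : ℕ) : ZMod p))⁻¹ ≠ 0 := by
      apply inv_ne_zero
      rw [Nat.cast_mul]
      apply mul_ne_zero <;>
      · rw [Ne, ZMod.natCast_eq_zero_iff]
        rw [hp.dvd_factorial]
        omega
    exact mul_ne_zero (mul_ne_zero h1 h2) h3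
end

section
/- For all σ₁, σ₃ in a field K of characteristic 0 with 4σ₁³ − 36σ₁² + 81σ₁ + 27σ₃ − 54 ≠ 0, the rational function F(z) = ((12−2σ₁)z³ + (2σ₁²−15σ₁+18)z² + 2σ₁σ₃−3σ₃) / (−3z³ + (9+3σ₁)z² − (18σ₁−27)z + 4σ₁²−12σ₁+3σ₃+9) satisfies F(2σ₁/3 − 1) = 2σ₁/3 − 1, and the point 2σ₁/3 − 1 is totally ramified (the numerator of F(z) − F(2σ₁/3 − 1) has z = 2σ₁/3 − 1 as a triple root). -/
open Polynomial

/-- The first normal form of Theorem 1 has a totally ramified fixed point at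
`z = 2σ₁/3 − 1`: writing `F = Np/Dp`, we have `F(pt) = pt` and `pt` is a triple root of
the numerator of `F(z) − pt`. -/
theorem stmt14 (K : Type*) [Field K] [CharZero K] (σ₁ σ₃ : K)
    (hres : 4 * σ₁ ^ 3 - 36 * σ₁ ^ 2 + 81 * σ₁ + 27 * σ₃ - 54 ≠ 0)
    (Np Dp : K[X]) (pt : K)
    (hNp : Np = C (12 - 2 * σ₁) * X ^ 3 + C (2 * σ₁ ^ 2 - 15 * σ₁ + 18) * X ^ 2
        + C (2 * σ₁ * σ₃ - 3 * σ₃))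
    (hDp : Dp = C (-3) * X ^ 3 + C (9 + 3 * σ₁) * X ^ 2 - C (18 * σ₁ - 27) * X
        + C (4 * σ₁ ^ 2 - 12 * σ₁ + 3 * σ₃ + 9))
    (hpt : pt = 2 * σ₁ / 3 - 1) :
    Np.eval pt = pt * Dp.eval pt ∧ Dp.eval pt ≠ 0 ∧
    (X - C pt) ^ 3 ∣ (Np - C pt * Dp) := by
  subst hNp hDp hpt
  refine ⟨?_, ?_, ⟨C 9, ?_⟩⟩
  · simp only [eval_add, eval_sub, eval_mul, eval_pow, eval_C, eval_X]
    field_simp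
    ring
  · simp only [eval_add, eval_sub, eval_mul, eval_pow, eval_C, eval_X]
    intro h
    apply hres
    have h3 : (3:K) ≠ 0 := by norm_num
    field_simp at h
    linear_combination h
  · have : Infinite K := Infinite.of_injective (Nat.cast) Nat.cast_injective
    apply Polynomial.funext
    intro x
    simp only [eval_add, eval_sub, eval_mul, eval_pow, eval_C, eval_X]
    field_simp
    ring
end

section
/- The rational map F(z) = (−3z³ + z² − 2z − 2)/(z³ − 5z² + 4z − 4) over ℚ has exactly four distinct fixed points {−i, i, 1−i, 1+i} (where i² = −1), each equal to its own multiplier: F'(x) = x at each fixed point x. Moreover Σ over the four fixed points of 1/(1−x) = 1. -/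
open Polynomial Complex
/-- The rational map `F(z) = (−3z³ + z² − 2z − 2)/(z³ − 5z² + 4z − 4)` has exactly four
distinct fixed points `{−i, i, 1−i, 1+i}`, each equal to its own multiplier
(`F'(x) = x`), and `Σ 1/(1−x) = 1` over the four fixed points. -/
theorem stmt17 (Np Dp : ℂ[X])
    (hNp : Np = C (-3) * X ^ 3 + X ^ 2 - C 2 * X - C 2)
    (hDp : Dp = X ^ 3 - C 5 * X ^ 2 + C 4 * X - C 4) :
    (Np - X * Dp).roots = {I, -I, 1 + I, 1 - I} ∧
    (∀ x ∈ ({I, -I, 1 + I, 1 - I} : Set ℂ),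
      Dp.eval x ≠ 0 ∧
      (derivative Np * Dp - Np * derivative Dp).eval x = x * (Dp.eval x) ^ 2) ∧
    1 / (1 - I) + 1 / (1 - (-I)) + 1 / (1 - (1 + I)) + 1 / (1 - (1 - I)) = 1 := by
  refine ⟨?_, ?_, ?_⟩
  · have h : Np - X * Dp =
        C (-1) * ((X - C I) * ((X - C (-I)) * ((X - C (1+I)) * (X - C (1-I))))) := by
      subst hNp hDp
      have hI : (C I : ℂ[X])^2 = -1 := by rw [← C_pow, Complex.I_sq]; simp
      simp only [map_neg, map_add, map_sub, map_one, map_ofNat]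
      linear_combination (-2*X^2 + 2*X + (C I)^2 - 2) * hI
    have m1 := monic_X_sub_C (1-I : ℂ)
    have m2 := (monic_X_sub_C (1+I : ℂ)).mul m1
    have m3 := (monic_X_sub_C (-I : ℂ)).mul m2
    rw [h, roots_C_mul _ (by norm_num : (-1:ℂ) ≠ 0),
      roots_mul ((monic_X_sub_C (I:ℂ)).mul m3).ne_zero,
      roots_mul m3.ne_zero, roots_mul m2.ne_zero,
      roots_X_sub_C, roots_X_sub_C, roots_X_sub_C, roots_X_sub_C]
    rfl
  · intro x hx
    have hI := Complex.I_sq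
    simp only [Set.mem_insert_iff, Set.mem_singleton_iff] at hx
    rcases hx with rfl | rfl | rfl | rfl <;>
      subst hNp hDp <;>
      constructor <;> simp <;>
      norm_num [Complex.ext_iff, pow_succ]
  · have h1 : (1:ℂ) - I ≠ 0 := by norm_num [Complex.ext_iff]
    have h2 : (1:ℂ) + I ≠ 0 := by norm_num [Complex.ext_iff]
    have h3 : (1:ℂ) - (1+I) ≠ 0 := by norm_num [Complex.ext_iff]
    have h4 : (1:ℂ) - (1-I) ≠ 0 := by norm_num [Complex.ext_iff]
    have hI := Complex.I_sq
    rw [sub_neg_eq_add]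
    field_simp
    linear_combination (-(I^2 + I - 1) + (I - 1)) * hI
end
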